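/- In any associative algebra over ℚ, for all elements u, v, w the following identity holds: [u³,[v,w]] = 3[u²,[uv,w]] − 3[u,[u²v,w]] + (3/2)[u²,[v,[u,w]]] − (3/2)[u,[v,[u²,w]]] + [u,[u,[u,[v,w]]]] − (3/2)[u,[u,[v,[u,w]]]] + (3/2)[u,[v,[u,[u,w]]]]. -/
import Mathlib


/-- in any associative algebra over ℚ, with `[a,b] = ab − ba`,
`[u³,[v,w]] = 3[u²,[uv,w]] − 3[u,[u²v,w]] + (3/2)[u²,[v,[u,w]]] − (3/2)[u,[v,[u²,w]]]
 + [u,[u,[u,[v,w]]]] − (3/2)[u,[u,[v,[u,w]]]] + (3/2)[u,[v,[u,[u,w]]]]`. -/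
theorem stmt_4 (R : Type*) [Ring R] [Algebra ℚ R] (u v w : R)
    (brk : R → R → R) (hbrk : ∀ a b : R, brk a b = a * b - b * a) :
    brk (u ^ 3) (brk v w) =
      3 * brk (u ^ 2) (brk (u * v) w)
      - 3 * brk u (brk (u ^ 2 * v) w)
      + (3 / 2 : ℚ) • brk (u ^ 2) (brk v (brk u w))
      - (3 / 2 : ℚ) • brk u (brk v (brk (u ^ 2) w))
      + brk u (brk u (brk u (brk v w)))
      - (3 / 2 : ℚ) • brk u (brk u (brk v (brk u w)))
      + (3 / 2 : ℚ) • brk u (brk v (brk u (brk u w))) := by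
  apply smul_right_injective R (two_ne_zero (α := ℚ))
  simp only [hbrk, smul_add, smul_sub, smul_smul]
  norm_num
  simp only [Algebra.smul_def, map_ofNat]
  noncomm_ring
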